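/- Fix real constants ω > B ≥ 0 and M > 1. For each integer i ≥ 1 and x, y ∈ ℝ⁴ define the sliced LSZ propagator C^i(x,y) = ∫_{M^{-2i}}^{M^{-2(i-1)}} ( ω² / (2π·sinh ωt)² ) · exp( −(ω/2)·[ (cosh Bt / sinh ωt)·‖x − y‖² + ((cosh ωt − cosh Bt)/ sinh ωt)·(‖x‖² + ‖y‖²) + i·(sinh Bt / sinh ωt)·σ(x,y) ] ) dt, where σ(x,y) = (2/θ)(x₁y₂ − x₂y₁ + x₃y₄ − x₄y₃) for a fixed θ > 0. Then there exist constants K > 0 and c > 0, depending only on ω, B, M, such that for all i ≥ 1 and all x, y ∈ ℝ⁴, |C^i(x,y)| ≤ K·M^{2i}·exp( −c·( M^{i}·‖x − y‖ + M^{-i}·‖x + y‖ ) ). -/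

import Mathlib

open MeasureTheory Real

/-- The symplectic pairing `x·θ⁻¹·y` on `ℝ⁴`. -/
noncomputable def symplecticPairing (θ : ℝ) (x y : EuclideanSpace ℝ (Fin 4)) : ℝ :=
  (2 / θ) * (x 0 * y 1 - x 1 * y 0 + x 2 * y 3 - x 3 * y 2)

/-- The slice `i` of the LSZ propagator. -/
noncomputable def slicedLSZPropagator (ω B θ M : ℝ) (i : ℕ)
    (x y : EuclideanSpace ℝ (Fin 4)) : ℂ :=
  ∫ t in Set.Icc (M ^ (-2 * (i : ℝ))) (M ^ (-2 * ((i : ℝ) - 1))),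
    Complex.ofReal (ω ^ 2 / (2 * π * Real.sinh (ω * t)) ^ 2) *
      Complex.exp (-(Complex.ofReal ω / 2) *
        (Complex.ofReal (Real.cosh (B * t) / Real.sinh (ω * t)) *
            Complex.ofReal (‖x - y‖ ^ 2)
          + Complex.ofReal ((Real.cosh (ω * t) - Real.cosh (B * t)) / Real.sinh (ω * t)) *
              Complex.ofReal (‖x‖ ^ 2 + ‖y‖ ^ 2)
          + Complex.I * Complex.ofReal (Real.sinh (B * t) / Real.sinh (ω * t)) *
              Complex.ofReal (symplecticPairing θ x y)))

lemma aux_cosh_sub_cosh (a b : ℝ) :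
    Real.cosh a - Real.cosh b = 2 * Real.sinh ((a+b)/2) * Real.sinh ((a-b)/2) := by
  rw [Real.cosh_eq, Real.cosh_eq, Real.sinh_eq, Real.sinh_eq]
  have h1 : Real.exp ((a+b)/2) * Real.exp ((a-b)/2) = Real.exp a := by
    rw [← Real.exp_add]; ring_nf
  have h2 : Real.exp ((a+b)/2) * Real.exp (-((a-b)/2)) = Real.exp b := by
    rw [← Real.exp_add]; ring_nf
  have h3 : Real.exp (-((a+b)/2)) * Real.exp ((a-b)/2) = Real.exp (-b) := by
    rw [← Real.exp_add]; ring_nf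
  have h4 : Real.exp (-((a+b)/2)) * Real.exp (-((a-b)/2)) = Real.exp (-a) := by
    rw [← Real.exp_add]; ring_nf
  linear_combination (-1/2)*h1 + (1/2)*h2 + (1/2)*h3 - (1/2)*h4

lemma aux_sinh_le (ω t : ℝ) (ht : 0 ≤ t) (ht1 : t ≤ 1) :
    Real.sinh (ω * t) ≤ (Real.exp ω + ω) / 2 * t := by
  have hconv := convexOn_exp.2 (Set.mem_univ (0:ℝ)) (Set.mem_univ ω)
    (by linarith : (0:ℝ) ≤ 1 - t) ht (by ring)
  simp only [smul_eq_mul, mul_zero, zero_add, Real.exp_zero, mul_one] at hconv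
  have hlow := Real.add_one_le_exp (-(t*ω))
  rw [Real.sinh_eq, mul_comm ω t]
  linarith

lemma aux_quad (a p : ℝ) (ha : 0 < a) : -(a*p^2) ≤ 1/(4*a) - p := by
  have h4a : (0:ℝ) < 4*a := by linarith
  have hc := mul_inv_cancel₀ h4a.ne'
  have hsq := sq_nonneg (2*a*p - 1)
  rw [one_div]
  nlinarith [mul_pos h4a (mul_pos h4a h4a), inv_pos.mpr h4a]

set_option maxHeartbeats 1000000 in
/-- The sliced LSZ propagator obeys the same short/long-variable scaled bound as the
Grosse–Wulkenhaar propagator. -/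
theorem sliced_LSZ_propagator_bound (ω B M θ : ℝ)
    (hB : 0 ≤ B) (hωB : B < ω) (hM : 1 < M) (hθ : 0 < θ) :
    ∃ K c : ℝ, 0 < K ∧ 0 < c ∧
      ∀ i : ℕ, 1 ≤ i → ∀ x y : EuclideanSpace ℝ (Fin 4),
        ‖slicedLSZPropagator ω B θ M i x y‖ ≤
          K * M ^ (2 * (i : ℝ)) *
            Real.exp (-c * (M ^ (i : ℝ) * ‖x - y‖ + M ^ (-(i : ℝ)) * ‖x + y‖)) := by
  have hω : 0 < ω := hB.trans_lt hωB
  have hM0 : (0:ℝ) < M := lt_trans one_pos hM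
  have hπ := Real.pi_pos
  have hB2 : B^2 < ω^2 := by nlinarith
  set S : ℝ := (Real.exp ω + ω) / 2 with hS_def
  have hS : 0 < S := by have := Real.exp_pos ω; positivity
  clear_value S
  set a : ℝ := ω / (2 * S * M^2) with ha_def
  have hden : (0:ℝ) < 2 * S * M^2 := mul_pos (mul_pos two_pos hS) (pow_pos hM0 2)
  have ha : 0 < a := div_pos hω hden
  clear_value a
  set b : ℝ := ω * (ω^2 - B^2) / (8 * S) with hb_def
  have hb : 0 < b := div_pos (mul_pos hω (by linarith)) (by linarith)
  clear_value b
  refine ⟨Real.exp (1/(4*a) + 1/(4*b)) * M^2 / (4*π^2), 1, by positivity, one_pos, ?_⟩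
  intro i hi x y
  set s : ℝ := M ^ (i:ℝ) with hs_def
  have hs0 : 0 < s := Real.rpow_pos_of_pos hM0 _
  have hsM : M ≤ s := by
    calc M = M ^ (1:ℝ) := (Real.rpow_one M).symm
    _ ≤ s := Real.rpow_le_rpow_of_exponent_le hM.le (by exact_mod_cast hi)
  have hss0 : 0 < s * s := mul_pos hs0 hs0
  have h2i : M ^ (2*(i:ℝ)) = s * s := by
    rw [two_mul, Real.rpow_add hM0]
  have hA : M ^ (-2*(i:ℝ)) = (s*s)⁻¹ := by
    rw [show (-2*(i:ℝ)) = -(2*(i:ℝ)) by ring, Real.rpow_neg hM0.le, h2i]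
  have hBnd : M ^ (-2*((i:ℝ)-1)) = M^2 * (s*s)⁻¹ := by
    rw [show (-2*((i:ℝ)-1)) = (2:ℝ) + -(2*(i:ℝ)) by ring, Real.rpow_add hM0,
      Real.rpow_neg hM0.le, h2i, Real.rpow_two]
  have hinv : M ^ (-(i:ℝ)) = s⁻¹ := by rw [Real.rpow_neg hM0.le]
  clear_value s
  have hub_le_one : M^2 * (s*s)⁻¹ ≤ 1 := by
    have hM2ss : M^2 ≤ s*s := by
      rw [pow_two]; exact mul_le_mul hsM hsM hM0.le (hM0.le.trans hsM)
    have h := mul_le_mul_of_nonneg_right hM2ss (inv_nonneg.mpr hss0.le)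
    rwa [mul_inv_cancel₀ hss0.ne'] at h
  set u : ℝ := ‖x - y‖ with hu_def
  set v : ℝ := ‖x + y‖ with hv_def
  have hu0 : 0 ≤ u := hu_def ▸ norm_nonneg _
  have hv0 : 0 ≤ v := hv_def ▸ norm_nonneg _
  have hn2 : v^2 ≤ 2 * (‖x‖^2 + ‖y‖^2) := by
    rw [hv_def]
    have hp := parallelogram_law_with_norm ℝ x y
    nlinarith [hp, mul_self_nonneg ‖x - y‖]
  clear_value u v
  set E : ℝ := Real.exp (1/(4*a) + 1/(4*b)) * Real.exp (-(s*u + s⁻¹*v)) with hE_def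
  have hE0 : 0 ≤ E := by rw [hE_def]; positivity
  clear_value E
  set C : ℝ := (s*s)^2/(4*π^2) * E with hC_def
  have hC0 : 0 ≤ C := by
    rw [hC_def]
    exact mul_nonneg (div_nonneg (sq_nonneg _) (by positivity)) hE0
  clear_value C
  have key : ∀ t ∈ Set.Icc (M ^ (-2 * (i : ℝ))) (M ^ (-2 * ((i : ℝ) - 1))),
      ‖Complex.ofReal (ω ^ 2 / (2 * π * Real.sinh (ω * t)) ^ 2) *
        Complex.exp (-(Complex.ofReal ω / 2) *
          (Complex.ofReal (Real.cosh (B * t) / Real.sinh (ω * t)) *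
              Complex.ofReal (‖x - y‖ ^ 2)
            + Complex.ofReal ((Real.cosh (ω * t) - Real.cosh (B * t)) / Real.sinh (ω * t)) *
                Complex.ofReal (‖x‖ ^ 2 + ‖y‖ ^ 2)
            + Complex.I * Complex.ofReal (Real.sinh (B * t) / Real.sinh (ω * t)) *
                Complex.ofReal (symplecticPairing θ x y)))‖ ≤ C := by
    intro t ht
    rw [hA, hBnd] at ht
    obtain ⟨ht1, ht2⟩ := ht
    have ht0 : 0 < t := lt_of_lt_of_le (inv_pos.mpr hss0) ht1
    have htle1 : t ≤ 1 := ht2.trans hub_le_one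
    have hsinht : 0 < Real.sinh (ω * t) := Real.sinh_pos_iff.mpr (mul_pos hω ht0)
    have hsle : Real.sinh (ω * t) ≤ S * t := by
      rw [hS_def]; exact aux_sinh_le ω t ht0.le htle1
    have h1tss : 1 ≤ t * (s*s) := by
      have h := mul_le_mul_of_nonneg_right ht1 hss0.le
      rwa [inv_mul_cancel₀ hss0.ne'] at h
    set r : ℝ := ω ^ 2 / (2 * π * Real.sinh (ω * t)) ^ 2 with hr_def
    have hr0 : 0 ≤ r := by rw [hr_def]; positivity
    -- prefactor bound
    have hrb : r ≤ (s*s)^2/(4*π^2) := by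
      rw [hr_def]
      have hωt : ω*t ≤ Real.sinh (ω*t) := Real.self_le_sinh_iff.mpr (mul_pos hω ht0).le
      have hb0 : (0:ℝ) < 2*π*(ω*t) := by
        exact mul_pos (mul_pos two_pos hπ) (mul_pos hω ht0)
      have e1 : ω^2 / (2*π*Real.sinh (ω*t))^2 ≤ ω^2/(2*π*(ω*t))^2 := by
        apply div_le_div_of_nonneg_left (sq_nonneg ω) (pow_pos hb0 2)
        apply pow_le_pow_left₀ hb0.le
          (mul_le_mul_of_nonneg_left hωt (by positivity)) 2
      refine e1.trans ?_
      rw [div_le_div_iff₀ (pow_pos hb0 2) (by positivity)]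
      have h2 : 1*1 ≤ (t*(s*s)) * (t*(s*s)) :=
        mul_le_mul h1tss h1tss zero_le_one (le_trans zero_le_one h1tss)
      calc ω^2*(4*π^2) = 4*π^2*ω^2*(1*1) := by ring
        _ ≤ 4*π^2*ω^2*((t*(s*s))*(t*(s*s))) :=
            mul_le_mul_of_nonneg_left h2 (by positivity)
        _ = (s*s)^2*(2*π*(ω*t))^2 := by ring
    clear_value r
    set c1 : ℝ := Real.cosh (B * t) / Real.sinh (ω * t) with hc1_def
    have hc1 : (s*s)/(S*M^2) ≤ c1 := by
      have e1 : Real.sinh (ω*t) ≤ S * (M^2 * (s*s)⁻¹) :=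
        hsle.trans (mul_le_mul_of_nonneg_left ht2 hS.le)
      have e2 : 1/(S * (M^2 * (s*s)⁻¹)) ≤ 1/Real.sinh (ω*t) :=
        one_div_le_one_div_of_le hsinht e1
      have e3 : 1/Real.sinh (ω*t) ≤ c1 := by
        rw [hc1_def, div_le_div_iff₀ hsinht hsinht]
        exact mul_le_mul_of_nonneg_right (Real.one_le_cosh (B*t)) hsinht.le
      have e4 : (s*s)/(S*M^2) = 1/(S * (M^2 * (s*s)⁻¹)) := by
        field_simp
      rw [e4]; exact e2.trans e3
    clear_value c1
    set c2 : ℝ := (Real.cosh (ω * t) - Real.cosh (B * t)) / Real.sinh (ω * t) with hc2_def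
    have hcc : (ω^2 - B^2)/2 * t^2 ≤ Real.cosh (ω*t) - Real.cosh (B*t) := by
      rw [aux_cosh_sub_cosh]
      have hp0 : 0 ≤ (ω*t + B*t)/2 := by
        linarith [mul_pos hω ht0, mul_nonneg hB ht0.le]
      have hq0 : 0 ≤ (ω*t - B*t)/2 := by
        linarith [mul_le_mul_of_nonneg_right hωB.le ht0.le]
      have hp := Real.self_le_sinh_iff.mpr hp0
      have hq := Real.self_le_sinh_iff.mpr hq0
      have hkey := mul_le_mul hp hq hq0 (hp0.trans hp)
      calc (ω^2 - B^2)/2 * t^2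
          = 2*(((ω*t + B*t)/2)*((ω*t - B*t)/2)) := by ring
        _ ≤ 2*(Real.sinh ((ω*t + B*t)/2) * Real.sinh ((ω*t - B*t)/2)) := by linarith
        _ = 2 * Real.sinh ((ω*t + B*t)/2) * Real.sinh ((ω*t - B*t)/2) := by ring
    have hc2 : (ω^2 - B^2)/(2*S*(s*s)) ≤ c2 := by
      have hnum0 : (0:ℝ) ≤ (ω^2 - B^2)/2 * t^2 :=
        mul_nonneg (by linarith) (sq_nonneg t)
      have e1 : (ω^2 - B^2)/2 * t^2 / (S*t) ≤ c2 := by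
        rw [hc2_def]
        exact div_le_div₀ (le_trans hnum0 hcc) hcc hsinht hsle
      refine le_trans ?_ e1
      have d1 : (0:ℝ) < 2*S*(s*s) := mul_pos (mul_pos two_pos hS) hss0
      have d2 : (0:ℝ) < S*t := mul_pos hS ht0
      rw [div_le_div_iff₀ d1 d2]
      have hcn : (0:ℝ) ≤ (ω^2 - B^2)*S*t :=
        mul_nonneg (mul_nonneg (by linarith) hS.le) ht0.le
      calc (ω^2 - B^2)*(S*t) = ((ω^2 - B^2)*S*t)*1 := by ring
        _ ≤ ((ω^2 - B^2)*S*t)*(t*(s*s)) := mul_le_mul_of_nonneg_left h1tss hcn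
        _ = (ω^2 - B^2)/2*t^2*(2*S*(s*s)) := by ring
    have hc2_0 : 0 ≤ c2 :=
      le_trans (div_nonneg (by linarith) (mul_pos (mul_pos two_pos hS) hss0).le) hc2
    clear_value c2
    -- norm of the integrand
    have hnorm : ∀ z : ℂ, ‖Complex.ofReal r * Complex.exp z‖ = r * Real.exp z.re := by
      intro z
      rw [norm_mul, Complex.norm_real, Complex.norm_exp,
        Real.norm_eq_abs, abs_of_nonneg hr0]
    rw [hnorm]
    have hzre : (-(Complex.ofReal ω / 2) *
          (Complex.ofReal c1 * Complex.ofReal (‖x - y‖ ^ 2)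
            + Complex.ofReal c2 * Complex.ofReal (‖x‖ ^ 2 + ‖y‖ ^ 2)
            + Complex.I * Complex.ofReal (Real.sinh (B * t) / Real.sinh (ω * t)) *
                Complex.ofReal (symplecticPairing θ x y))).re
        = -(ω/2) * (c1 * ‖x - y‖^2 + c2 * (‖x‖^2 + ‖y‖^2)) := by
      rw [show -(Complex.ofReal ω / 2) = Complex.ofReal (-(ω/2)) by push_cast; ring]
      simp only [Complex.re_ofReal_mul, Complex.add_re, Complex.mul_re, Complex.mul_im,
        Complex.ofReal_re, Complex.ofReal_im, Complex.I_re, Complex.I_im]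
      ring
    rw [hzre, ← hu_def]
    -- real part bound
    have hω2 : (0:ℝ) ≤ ω/2 := by linarith
    have k1 : a*(s*u)^2 ≤ (ω/2) * (c1 * u^2) := by
      have e : a*(s*u)^2 = (ω/2) * ((s*s)/(S*M^2) * u^2) := by
        rw [ha_def]; field_simp
      rw [e]
      exact mul_le_mul_of_nonneg_left
        (mul_le_mul_of_nonneg_right hc1 (sq_nonneg u)) hω2
    have k2 : b*(s⁻¹*v)^2 ≤ (ω/2) * (c2 * (‖x‖^2 + ‖y‖^2)) := by
      have e : b*(s⁻¹*v)^2 = (ω/2) * ((ω^2 - B^2)/(2*S*(s*s)) * (v^2/2)) := by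
        rw [hb_def]; field_simp; ring
      rw [e]
      refine mul_le_mul_of_nonneg_left ?_ hω2
      exact mul_le_mul hc2 (by linarith) (by positivity) hc2_0
    have hre : -(ω/2) * (c1 * u^2 + c2 * (‖x‖^2 + ‖y‖^2))
        ≤ (1/(4*a) + 1/(4*b)) + (-(s*u + s⁻¹*v)) := by
      have q1 := aux_quad a (s*u) ha
      have q2 := aux_quad b (s⁻¹*v) hb
      linarith
    -- combine
    rw [hC_def, hE_def]
    calc r * Real.exp (-(ω/2) * (c1 * u^2 + c2 * (‖x‖^2 + ‖y‖^2)))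
        ≤ (s*s)^2/(4*π^2) * Real.exp ((1/(4*a) + 1/(4*b)) + (-(s*u + s⁻¹*v))) := by
          exact mul_le_mul hrb (Real.exp_le_exp.mpr hre) (Real.exp_pos _).le
            (div_nonneg (sq_nonneg _) (by positivity))
      _ = (s*s)^2/(4*π^2) * (Real.exp (1/(4*a) + 1/(4*b)) * Real.exp (-(s*u + s⁻¹*v))) := by
          rw [Real.exp_add]
  -- volume bound
  have hmono : M ^ (-2*(i:ℝ)) ≤ M ^ (-2*((i:ℝ)-1)) :=
    Real.rpow_le_rpow_of_exponent_le hM.le (by linarith)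
  have hvol : (volume (Set.Icc (M ^ (-2 * (i : ℝ))) (M ^ (-2 * ((i : ℝ) - 1))))).toReal
      ≤ M^2 * (s*s)⁻¹ := by
    rw [Real.volume_Icc, ENNReal.toReal_ofReal (sub_nonneg.mpr hmono)]
    rw [hA, hBnd]
    have h0 : 0 < (s*s)⁻¹ := inv_pos.mpr hss0
    linarith
  have hbound := norm_setIntegral_le_of_norm_le_const (μ := volume)
    (by rw [Real.volume_Icc]; exact ENNReal.ofReal_lt_top) key
  rw [slicedLSZPropagator]
  refine hbound.trans ?_
  refine (mul_le_mul_of_nonneg_left hvol hC0).trans ?_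
  rw [h2i, hinv, neg_one_mul]
  apply le_of_eq
  rw [hC_def, hE_def]
  field_simp
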